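/- Let a, b, q be real numbers with q ≥ 0 and ab + q > 0. Set r₊ = √(ab + q), 𝔪 = q + (a+b)²/2, Q = (√3 π q)/4, 𝒥₁ = (π/4)(2a𝔪 + qb), 𝒥₂ = (π/4)(2b𝔪 + qa), and A = 8π²·(r₊⁴ + r₊²(a² + b²) + ab(ab + q))/(4r₊). Then π²𝒥₁𝒥₂ + (4π/(3√3))Q³ > 0 and A = 8√(π²𝒥₁𝒥₂ + (4π/(3√3))Q³). -/

import Mathlib

open Real

/-- The extreme charged Myers–Perry (CCLP, Λ = 0) black hole saturates the
area–angular momenta–charge inequality of Theorem 2.1. -/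
theorem stmt2 (a b q r m Q J1 J2 A : ℝ)
    (hq : 0 ≤ q) (habq : 0 < a * b + q)
    (hr : r = Real.sqrt (a * b + q))
    (hm : m = q + (a + b) ^ 2 / 2)
    (hQ : Q = Real.sqrt 3 * π * q / 4)
    (hJ1 : J1 = π / 4 * (2 * a * m + q * b))
    (hJ2 : J2 = π / 4 * (2 * b * m + q * a))
    (hA : A = 8 * π ^ 2 * (r ^ 4 + r ^ 2 * (a ^ 2 + b ^ 2) + a * b * (a * b + q)) / (4 * r)) :
    0 < π ^ 2 * J1 * J2 + 4 * π / (3 * Real.sqrt 3) * Q ^ 3 ∧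
      A = 8 * Real.sqrt (π ^ 2 * J1 * J2 + 4 * π / (3 * Real.sqrt 3) * Q ^ 3) := by
  have hs3 : Real.sqrt 3 ^ 2 = 3 := Real.sq_sqrt (by norm_num)
  have hs3pos : (0:ℝ) < Real.sqrt 3 := Real.sqrt_pos.mpr (by norm_num)
  have hr2 : r ^ 2 = a * b + q := by rw [hr]; exact Real.sq_sqrt habq.le
  have hrpos : 0 < r := by rw [hr]; exact Real.sqrt_pos.mpr habq
  have hmq : 0 < 2 * m - q := by nlinarith [sq_nonneg (a - b), sq_nonneg (a + b)]
  set X : ℝ := π ^ 2 * r * (2 * m - q) / 4 with hX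
  have hXpos : 0 < X := by
    have := Real.pi_pos
    positivity
  have hterm : 4 * π / (3 * Real.sqrt 3) * Q ^ 3 = π ^ 4 * q ^ 3 / 16 := by
    rw [hQ]
    have h3 : Real.sqrt 3 ^ 3 = 3 * Real.sqrt 3 := by
      rw [pow_succ, hs3]
    field_simp
    linear_combination 16 * q ^ 3 * hs3
  have hE : π ^ 2 * J1 * J2 + 4 * π / (3 * Real.sqrt 3) * Q ^ 3 = X ^ 2 := by
    rw [hterm, hJ1, hJ2, hX, hm]
    linear_combination (-(π ^ 4 / 16) * (q + (a + b) ^ 2) ^ 2) * hr2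
  have hA8 : A = 8 * X := by
    have hnum : r ^ 4 + r ^ 2 * (a ^ 2 + b ^ 2) + a * b * (a * b + q)
        = r ^ 2 * (2 * m - q) := by
      linear_combination (r ^ 2 - a * b) * hr2 + (-2 * r ^ 2) * hm
    rw [hA, hnum, hX]
    field_simp
  refine ⟨by rw [hE]; positivity, ?_⟩
  rw [hE, Real.sqrt_sq hXpos.le, hA8]
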